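/- Let $\{V_n\},\{W_n\},\{U_n\}$ be consistent sequences of $\{G_n\}$-representations, $\{K_n \subseteq U_n\}$ intersection- and projection-compatible convex cones, and $C_n = \{x \in V_n : \exists y \in W_n,\ A_n x + B_n y + u_n \in K_n\}$. Suppose $\{A_n\},\{A_n^*\},\{B_n\},\{B_n^*\}$ are all morphisms of sequences, $\{u_n\}$ is freely-described, and $u_{n+1} - u_n \in K_{n+1} + A_{n+1}(V_n^\perp) + B_{n+1}(W_n)$ for all $n$. Then $\{C_n\}$ is projection-compatible: $\mathcal{P}_{V_n} C_{n+1} = C_n$. -/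

import Mathlib

/-- Given consistent sequences `{V n}, {W n}, {U n}`, intersection- and
projection-compatible cones `{K n}`, and
`C n = {x ∈ V n | ∃ y ∈ W n, A n x + B n y + u n ∈ K n}`, if `{A n}, {A n *}, {B n},
{B n *}` are all morphisms of sequences, `{u n}` is freely described, and
`u (n+1) - u n ∈ K (n+1) + A (n+1) (V nᗮ) + B (n+1) (W n)` for all `n`, then `{C n}` is
projection-compatible: `𝒫_{V n} '' C (n+1) = C n`. -/
theorem certified_projection_compatibility_b
    {Γ : Type*} [Group Γ] (G : ℕ → Subgroup Γ) (hG : ∀ n, G n ≤ G (n + 1))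
    {HV HW HU : Type*}
    [NormedAddCommGroup HV] [InnerProductSpace ℝ HV] [FiniteDimensional ℝ HV]
    [NormedAddCommGroup HW] [InnerProductSpace ℝ HW] [FiniteDimensional ℝ HW]
    [NormedAddCommGroup HU] [InnerProductSpace ℝ HU] [FiniteDimensional ℝ HU]
    (ρV : Γ →* (HV ≃ₗᵢ[ℝ] HV)) (ρW : Γ →* (HW ≃ₗᵢ[ℝ] HW)) (ρU : Γ →* (HU ≃ₗᵢ[ℝ] HU))
    (V : ℕ → Submodule ℝ HV) (hV : ∀ n, V n ≤ V (n + 1))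
    (W : ℕ → Submodule ℝ HW) (hW : ∀ n, W n ≤ W (n + 1))
    (U : ℕ → Submodule ℝ HU) (hU : ∀ n, U n ≤ U (n + 1))
    (hactV : ∀ n m, n ≤ m → ∀ g ∈ G n, ∀ v ∈ V m, ρV g v ∈ V m)
    (hactW : ∀ n m, n ≤ m → ∀ g ∈ G n, ∀ w ∈ W m, ρW g w ∈ W m)
    (hactU : ∀ n m, n ≤ m → ∀ g ∈ G n, ∀ u ∈ U m, ρU g u ∈ U m)
    (K : ℕ → ConvexCone ℝ HU)
    (hKU : ∀ n, (K n : Set HU) ⊆ (U n : Set HU))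
    (hKinv : ∀ n, ∀ g ∈ G n, ∀ x ∈ K n, ρU g x ∈ K n)
    (hKint : ∀ n, (K (n + 1) : Set HU) ∩ (U n : Set HU) = (K n : Set HU))
    (hKproj : ∀ n, (fun x : HU => (Submodule.orthogonalProjectionOnto (U n) x : HU)) ''
        (K (n + 1) : Set HU) = (K n : Set HU))
    (A : ℕ → HV →ₗ[ℝ] HU) (B : ℕ → HW →ₗ[ℝ] HU)
    (hAmaps : ∀ n, ∀ v ∈ V n, A n v ∈ U n)
    (hAequiv : ∀ n, ∀ g ∈ G n, ∀ v ∈ V n, A n (ρV g v) = ρU g (A n v))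
    (hAcompat : ∀ n, ∀ v ∈ V n, A (n + 1) v = A n v)
    (hAadj : ∀ n, ∀ v ∈ V (n + 1),
      (Submodule.orthogonalProjectionOnto (U n) (A (n + 1) v) : HU)
        = A n (Submodule.orthogonalProjectionOnto (V n) v))
    (hBmaps : ∀ n, ∀ w ∈ W n, B n w ∈ U n)
    (hBequiv : ∀ n, ∀ g ∈ G n, ∀ w ∈ W n, B n (ρW g w) = ρU g (B n w))
    (hBcompat : ∀ n, ∀ w ∈ W n, B (n + 1) w = B n w)
    (hBadj : ∀ n, ∀ w ∈ W (n + 1),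
      (Submodule.orthogonalProjectionOnto (U n) (B (n + 1) w) : HU)
        = B n (Submodule.orthogonalProjectionOnto (W n) w))
    (u : ℕ → HU)
    (humem : ∀ n, u n ∈ U n)
    (huinv : ∀ n, ∀ g ∈ G n, ρU g (u n) = u n)
    (hufree : ∀ n, (Submodule.orthogonalProjectionOnto (U n) (u (n + 1)) : HU) = u n)
    (hucone : ∀ n, ∃ k ∈ K (n + 1), ∃ z ∈ V (n + 1) ⊓ (V n)ᗮ, ∃ w ∈ W n,
      u (n + 1) - u n = k + A (n + 1) z + B (n + 1) w) :
    ∀ n, (fun x : HV => (Submodule.orthogonalProjectionOnto (V n) x : HV)) ''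
          {x : HV | x ∈ V (n + 1) ∧
            ∃ y ∈ W (n + 1), A (n + 1) x + B (n + 1) y + u (n + 1) ∈ K (n + 1)}
        = {x : HV | x ∈ V n ∧ ∃ y ∈ W n, A n x + B n y + u n ∈ K n} := by

  intro n
  ext x₀
  simp only [Set.mem_image, Set.mem_setOf_eq]
  constructor
  · rintro ⟨x, ⟨hxV, y, hyW, hK⟩, rfl⟩
    refine ⟨Submodule.coe_mem _, (Submodule.orthogonalProjectionOnto (W n) y : HW),
      Submodule.coe_mem _, ?_⟩
    have key : (Submodule.orthogonalProjectionOnto (U n) (A (n+1) x + B (n+1) y + u (n+1)) : HU)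
        = A n (Submodule.orthogonalProjectionOnto (V n) x) + B n (Submodule.orthogonalProjectionOnto (W n) y) + u n := by
      rw [map_add, map_add, Submodule.coe_add, Submodule.coe_add,
        hAadj n x hxV, hBadj n y hyW, hufree n]
    have hmem : A n (Submodule.orthogonalProjectionOnto (V n) x : HV)
        + B n (Submodule.orthogonalProjectionOnto (W n) y : HW) + u n ∈ (K n : Set HU) := by
      rw [← hKproj n]
      exact ⟨_, hK, key⟩
    exact hmem
  · rintro ⟨hxV, y, hyW, hκ⟩
    obtain ⟨k, hk, z, hz, w, hw, hu'⟩ := hucone n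
    obtain ⟨hz1, hz2⟩ := Submodule.mem_inf.mp hz
    refine ⟨x₀ - z, ⟨sub_mem (hV n hxV) hz1, y - w,
      sub_mem (hW n hyW) (hW n hw), ?_⟩, ?_⟩
    · have heq : A (n+1) (x₀ - z) + B (n+1) (y - w) + u (n+1)
          = (A n x₀ + B n y + u n) + k := by
        rw [map_sub, map_sub, sub_eq_iff_eq_add.mp hu', hAcompat n x₀ hxV,
          hBcompat n y hyW]
        abel
      rw [heq]
      have h1 : (A n x₀ + B n y + u n) ∈ K (n+1) := by
        have : (A n x₀ + B n y + u n) ∈ (K (n+1) : Set HU) ∩ (U n : Set HU) := by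
          rw [hKint n]; exact hκ
        exact this.1
      exact (K (n+1)).add_mem h1 hk
    · rw [map_sub, Submodule.coe_sub, ← Submodule.starProjection_apply, Submodule.starProjection_eq_self_iff.mpr hxV,
        Submodule.orthogonalProjectionOnto_apply_of_mem_orthogonal hz2]
      simp
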